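/- Let k⟨X⟩ be Z^s-graded with every generator of total degree 1, G a set of homogeneous polynomials, A = k⟨X⟩/(G), and τ a graded algebra automorphism of k⟨X⟩ with τ(G) ⊆ (G), inducing an automorphism τ̄ of A. Then the twisted algebra A^{τ̄} is isomorphic as a Z^s-graded algebra to k⟨X⟩/(φ_{τ^{-1}}(G)), where φ_{τ^{-1}}: k⟨X⟩ → k⟨X⟩^{τ^{-1}} is the algebra homomorphism sending each generator x_i to x_i. -/

import Mathlib

namespace NC

/-- The free associative algebra on the alphabet `X`, with the words (the free
monoid on `X`) as a basis. -/
abbrev FA (k X : Type) [Field k] := MonoidAlgebra k (FreeMonoid X)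

variable {k X : Type} [Field k]

/-- The monomial on a word `u` (with coefficient `1`). -/
noncomputable def mono (k : Type) [Field k] {X : Type} (u : FreeMonoid X) : FA k X :=
  MonoidAlgebra.of k (FreeMonoid X) u

/-- `u` is a factor of `v`. -/
def IsFactor (u v : FreeMonoid X) : Prop := ∃ w₁ w₂ : FreeMonoid X, w₁ * u * w₂ = v

/-- The leading word of a polynomial (junk value `1` for the zero polynomial). -/
noncomputable def lw [LinearOrder (FreeMonoid X)] (f : FA k X) : FreeMonoid X :=
  f.coeff.support.max.unbotD 1

/-- The set of leading words of the nonzero members of `G`. -/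
def lwSet [LinearOrder (FreeMonoid X)] (G : Set (FA k X)) : Set (FreeMonoid X) :=
  {u | ∃ f ∈ G, f ≠ 0 ∧ lw f = u}

/-- The normal words modulo `G` : words having no factor among the leading words of `G`. -/
def nw [LinearOrder (FreeMonoid X)] (G : Set (FA k X)) : Set (FreeMonoid X) :=
  {u | ∀ v ∈ lwSet G, ¬ IsFactor v u}

/-- The two-sided ideal (as a `k`-submodule) generated by a set `S`. -/
noncomputable def ideal2 (k : Type) [Field k] {X : Type} (S : Set (FA k X)) : Submodule k (FA k X) :=
  Submodule.span k {x | ∃ a s b, s ∈ S ∧ x = a * s * b}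

/-- A `k`-submodule of the free algebra which is a two-sided ideal. -/
def IsTwoSided (𝔞 : Submodule k (FA k X)) : Prop :=
  ∀ a x : FA k X, x ∈ 𝔞 → a * x ∈ 𝔞 ∧ x * a ∈ 𝔞

/-- `G` is a Gröbner basis of the (two-sided) ideal `𝔞`. -/
def IsGrobner [LinearOrder (FreeMonoid X)] (𝔞 : Submodule k (FA k X))
    (G : Set (FA k X)) : Prop :=
  (∀ g ∈ G, g ∈ 𝔞) ∧ ∀ f ∈ 𝔞, f ≠ 0 → lw f ∉ nw G

/-- `G` is reduced: every member is monic and normal modulo the remaining members. -/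
def IsReducedGB [LinearOrder (FreeMonoid X)] (G : Set (FA k X)) : Prop :=
  ∀ f ∈ G, f.coeff (lw f) = 1 ∧ ∀ u ∈ f.coeff.support, u ∈ nw (G \ {f})

/-- The fixed linear order on words is admissible. -/
def IsAdmissible (X : Type) [LinearOrder (FreeMonoid X)] : Prop :=
  WellFoundedLT (FreeMonoid X) ∧ (∀ u : FreeMonoid X, u ≠ 1 → 1 < u) ∧
    ∀ u v w₁ w₂ : FreeMonoid X, u < v → w₁ * u * w₂ < w₁ * v * w₂

end NC

namespace NC2
open NC
variable {k X : Type} [Field k]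

/-- The (multi)degree of a word, for the grading determined by `e` on the letters. -/
def mdeg {σ : Type} [AddCommMonoid σ] (e : X → σ) (w : FreeMonoid X) : σ :=
  ((FreeMonoid.toList w).map e).sum

/-- `f` is homogeneous of degree `α`. -/
def IsHomog {σ : Type} [AddCommMonoid σ] (e : X → σ) (α : σ) (f : NC.FA k X) : Prop :=
  ∀ u ∈ f.coeff.support, mdeg e u = α

open Classical in
/-- The degree-`α` homogeneous component of `f`. -/
noncomputable def homComp {σ : Type} [AddCommMonoid σ] (e : X → σ) (α : σ) (f : NC.FA k X) :
    NC.FA k X :=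
  MonoidAlgebra.ofCoeff (Finsupp.filter (fun u => mdeg e u = α) f.coeff)

/-- A homogeneous (two-sided) ideal. -/
def IsHomogIdeal {σ : Type} [AddCommMonoid σ] (e : X → σ) (𝔞 : Submodule k (NC.FA k X)) : Prop :=
  NC.IsTwoSided 𝔞 ∧ ∀ f ∈ 𝔞, ∀ α : σ, homComp e α f ∈ 𝔞

/-- Polynomials supported on a given set of words. -/
noncomputable def wsupported (k : Type) [Field k] {X : Type} (S : Set (FreeMonoid X)) :
    Submodule k (NC.FA k X) :=
  (Finsupp.supported k k S).comap (MonoidAlgebra.coeffLinearEquiv k).toLinearMap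

/-- Dimension of the image, in the quotient by `𝔞`, of the span of the words in `S`. -/
noncomputable def hilbS (𝔞 : Submodule k (NC.FA k X)) (S : Set (FreeMonoid X)) : ℕ :=
  Module.finrank k ↥((wsupported k S).map 𝔞.mkQ)

/-- The multigraded Hilbert function of the quotient algebra `k⟨X⟩/𝔞`. -/
noncomputable def hilb {σ : Type} [AddCommMonoid σ] (e : X → σ) (𝔞 : Submodule k (NC.FA k X))
    (α : σ) : ℕ :=
  hilbS 𝔞 {u | mdeg e u = α}

/-- The monomial ideal on a set of words. -/
noncomputable def monIdeal (k : Type) [Field k] {X : Type} (V : Set (FreeMonoid X)) :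
    Submodule k (NC.FA k X) :=
  NC.ideal2 k ((fun u => NC.mono k u) '' V)

/-- Partial sums of a Hilbert function. -/
def psum (H : ℕ → ℕ) (n : ℕ) : ℕ := ∑ i ∈ Finset.range (n + 1), H i

/-- The growth function is bounded by a polynomial of degree `d`. -/
def PolyBoundedBy (H : ℕ → ℕ) (d : ℕ) : Prop := ∃ C : ℕ, ∀ n, psum H n ≤ C * (n + 1) ^ d

/-- Polynomial growth (of some degree). -/
def PolyGrowth (H : ℕ → ℕ) : Prop := ∃ d, PolyBoundedBy H d

/-- Polynomial growth of degree exactly `d`. -/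
def PolyGrowthDeg (H : ℕ → ℕ) (d : ℕ) : Prop :=
  ∃ C : ℕ, 0 < C ∧ ∀ n, psum H n ≤ C * (n + 1) ^ d ∧ (n + 1) ^ d ≤ C * psum H n

/-- Gelfand-Kirillov dimension of a graded algebra with Hilbert function `H`, as an
extended natural number. -/
noncomputable def gkdimH (H : ℕ → ℕ) : ℕ∞ :=
  sInf ((fun d : ℕ => (d : ℕ∞)) '' {d | PolyBoundedBy H d})

end NC2

namespace NC7
open NC NC2

variable {k X : Type} [Field k]

/-- The multiplication of the twisting algebra `k⟨X⟩^σ` of the free algebra by a graded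
automorphism `σ` (all generators having total degree one):
`f * g = Σ_u f_u · u · σ^{|u|}(g)`. -/
noncomputable def tmul (σ : NC.FA k X ≃ₐ[k] NC.FA k X) (f g : NC.FA k X) : NC.FA k X :=
  Finsupp.sum f.coeff (fun u a => a • (NC.mono k u * (σ ^ (FreeMonoid.toList u).length) g))

/-- The value on a word of the algebra homomorphism `k⟨X⟩ → k⟨X⟩^σ` fixing the
generators. -/
noncomputable def phiW (σ : NC.FA k X ≃ₐ[k] NC.FA k X) : List X → NC.FA k X
  | [] => 1
  | x :: t => tmul σ (NC.mono k (FreeMonoid.of x)) (phiW σ t)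

/-- The algebra homomorphism `φ_σ : k⟨X⟩ → k⟨X⟩^σ` fixing the generators, as a map. -/
noncomputable def phiMap (σ : NC.FA k X ≃ₐ[k] NC.FA k X) (f : NC.FA k X) : NC.FA k X :=
  Finsupp.sum f.coeff (fun u a => a • phiW σ (FreeMonoid.toList u))

/-- `τ` is a graded endomorphism for the grading `e`. -/
def GradedMap {σ : Type} [AddCommMonoid σ] (e : X → σ) (τ : NC.FA k X → NC.FA k X) : Prop :=
  ∀ (α : σ) (f : NC.FA k X), NC2.IsHomog e α f → NC2.IsHomog e α (τ f)

/-- `z` is a normal element modulo the two-sided ideal `𝔞`, i.e. its image in the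
quotient algebra is normal. -/
def NormalMod (𝔞 : Submodule k (NC.FA k X)) (z : NC.FA k X) : Prop :=
  ∀ a : NC.FA k X, (∃ b, z * a - b * z ∈ 𝔞) ∧ (∃ c, a * z - z * c ∈ 𝔞)

end NC7

namespace Stmt10Aux

open NC NC2 NC7 Finsupp

variable {k X : Type} [Field k]

/-! ### Basic monomial lemmas -/

lemma mono_def (u : FreeMonoid X) : NC.mono k u = MonoidAlgebra.single u (1 : k) :=
  MonoidAlgebra.of_apply k (FreeMonoid X) u

lemma mono_mul (u v : FreeMonoid X) :
    NC.mono k u * NC.mono k v = NC.mono k (u * v) :=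
  (map_mul (MonoidAlgebra.of k (FreeMonoid X)) u v).symm

lemma mono_one : NC.mono k (1 : FreeMonoid X) = 1 :=
  map_one (MonoidAlgebra.of k (FreeMonoid X))

lemma single_eq_smul (u : FreeMonoid X) (c : k) :
    (MonoidAlgebra.single u c : NC.FA k X) = c • NC.mono k u := by
  rw [mono_def, MonoidAlgebra.smul_single, smul_eq_mul, mul_one]

/-! ### mdeg lemmas -/

variable {s : ℕ}

lemma mdeg_mul (e : X → Fin s → ℕ) (u v : FreeMonoid X) :
    NC2.mdeg e (u * v) = NC2.mdeg e u + NC2.mdeg e v := by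
  unfold NC2.mdeg
  rw [FreeMonoid.toList_mul, List.map_append, List.sum_append]

lemma mdeg_of (e : X → Fin s → ℕ) (x : X) : NC2.mdeg e (FreeMonoid.of x) = e x := by
  simp [NC2.mdeg, FreeMonoid.toList_of]

lemma mdeg_one (e : X → Fin s → ℕ) : NC2.mdeg e (1 : FreeMonoid X) = 0 := rfl

lemma tdeg_list (e : X → Fin s → ℕ) (he : ∀ x, ∑ i, e x i = 1) :
    ∀ l : List X, (∑ i, ((l.map e).sum) i) = l.length
  | [] => by simp
  | x :: t => by
    have ih := tdeg_list e he t
    simp only [List.map_cons, List.sum_cons, Pi.add_apply, List.length_cons]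
    rw [Finset.sum_add_distrib, he x, ih, add_comm]

lemma tdeg_mdeg (e : X → Fin s → ℕ) (he : ∀ x, ∑ i, e x i = 1) (u : FreeMonoid X) :
    (∑ i, NC2.mdeg e u i) = u.toList.length :=
  tdeg_list e he u.toList

/-! ### The homogeneous submodules -/

noncomputable def Hsub (e : X → Fin s → ℕ) (α : Fin s → ℕ) : Submodule k (NC.FA k X) :=
  (Finsupp.supported k k {u : FreeMonoid X | NC2.mdeg e u = α}).comap
    (MonoidAlgebra.coeffLinearEquiv k).toLinearMap

lemma mem_Hsub {e : X → Fin s → ℕ} {α : Fin s → ℕ} {f : NC.FA k X} :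
    f ∈ (Hsub e α : Submodule k (NC.FA k X)) ↔ NC2.IsHomog e α f := by
  rw [Hsub, Submodule.mem_comap, Finsupp.mem_supported, NC2.IsHomog]
  constructor
  · intro h u hu; exact h hu
  · intro h u hu; exact h u hu

lemma mono_mem_Hsub (e : X → Fin s → ℕ) (u : FreeMonoid X) :
    NC.mono k u ∈ (Hsub e (NC2.mdeg e u) : Submodule k (NC.FA k X)) := by
  rw [mem_Hsub, NC2.IsHomog]
  intro w hw
  rw [mono_def, MonoidAlgebra.coeff_single] at hw
  have := Finsupp.support_single_subset hw
  simp only [Finset.mem_singleton] at this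
  subst this; rfl

lemma one_mem_Hsub (e : X → Fin s → ℕ) :
    (1 : NC.FA k X) ∈ (Hsub e 0 : Submodule k (NC.FA k X)) := by
  have := mono_mem_Hsub (k := k) e (1 : FreeMonoid X)
  rwa [mono_one, mdeg_one] at this

lemma mul_mem_Hsub {e : X → Fin s → ℕ} {α β : Fin s → ℕ} {f g : NC.FA k X}
    (hf : f ∈ (Hsub e α : Submodule k (NC.FA k X)))
    (hg : g ∈ (Hsub e β : Submodule k (NC.FA k X))) :
    f * g ∈ (Hsub e (α + β) : Submodule k (NC.FA k X)) := by
  classical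
  rw [mem_Hsub] at hf hg ⊢
  rw [NC2.IsHomog]
  intro w hw
  have := MonoidAlgebra.support_coeff_mul_subset f g hw
  rw [Finset.mem_mul] at this
  obtain ⟨a, ha, b, hb, rfl⟩ := this
  rw [mdeg_mul, hf a ha, hg b hb]

lemma finite_mdeg_set [Finite X] (e : X → Fin s → ℕ) (he : ∀ x, ∑ i, e x i = 1)
    (α : Fin s → ℕ) : {u : FreeMonoid X | NC2.mdeg e u = α}.Finite := by
  have h1 : {u : FreeMonoid X | NC2.mdeg e u = α} ⊆
      FreeMonoid.toList ⁻¹' {l : List X | l.length = ∑ i, α i} := by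
    intro u hu
    simp only [Set.mem_preimage, Set.mem_setOf_eq]
    rw [← tdeg_mdeg e he u, hu]
  have hinj : Function.Injective (FreeMonoid.toList (α := X)) := fun a b h => by
    rw [← FreeMonoid.ofList_toList a, h, FreeMonoid.ofList_toList]
  exact Set.Finite.subset ((List.finite_length_eq X (∑ i, α i)).preimage hinj.injOn) h1

lemma fd_Hsub [Finite X] (e : X → Fin s → ℕ) (he : ∀ x, ∑ i, e x i = 1) (α : Fin s → ℕ) :
    FiniteDimensional k (Hsub e α : Submodule k (NC.FA k X)) := by
  have hfin := finite_mdeg_set e he α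
  haveI : Finite ↥{u : FreeMonoid X | NC2.mdeg e u = α} := hfin
  haveI : FiniteDimensional k ↥(Finsupp.supported k k {u : FreeMonoid X | NC2.mdeg e u = α}) :=
    LinearEquiv.finiteDimensional
    ((Finsupp.supportedEquivFinsupp {u : FreeMonoid X | NC2.mdeg e u = α}).trans
      (Finsupp.linearEquivFunOnFinite k k _)).symm
  rw [Hsub, Submodule.comap_equiv_eq_map_symm]
  infer_instance

/-! ### symm stability via finite dimension -/

lemma symm_mem_of_stable (E : NC.FA k X ≃ₗ[k] NC.FA k X) (S : Submodule k (NC.FA k X))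
    [FiniteDimensional k S] (hst : ∀ x ∈ S, E x ∈ S) {x : NC.FA k X} (hx : x ∈ S) :
    E.symm x ∈ S := by
  let T : S →ₗ[k] S := E.toLinearMap.restrict hst
  have hinj : Function.Injective T := by
    intro a b hab
    exact Subtype.ext (E.injective (congrArg Subtype.val hab))
  obtain ⟨y, hy⟩ := (LinearMap.injective_iff_surjective).1 hinj ⟨x, hx⟩
  have hEy : E y = x := congrArg Subtype.val hy
  have : E.symm x = (y : NC.FA k X) := by rw [← hEy, E.symm_apply_apply]
  rw [this]; exact y.2

lemma graded_symm [Finite X] (e : X → Fin s → ℕ) (he : ∀ x, ∑ i, e x i = 1)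
    (τ : NC.FA k X ≃ₐ[k] NC.FA k X) (hτ : NC7.GradedMap e ⇑τ) :
    NC7.GradedMap e ⇑τ.symm := by
  intro α f hf
  rw [← mem_Hsub] at hf ⊢
  haveI := fd_Hsub (k := k) e he α
  have h := symm_mem_of_stable τ.toLinearEquiv (Hsub e α)
    (fun x hx => mem_Hsub.2 (hτ α x (mem_Hsub.1 hx))) hf
  exact h

lemma graded_pow {e : X → Fin s → ℕ} (σ : NC.FA k X ≃ₐ[k] NC.FA k X)
    (hσ : NC7.GradedMap e ⇑σ) : ∀ m : ℕ, NC7.GradedMap e ⇑(σ ^ m)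
  | 0 => by intro α f hf; rwa [pow_zero]; 
  | m + 1 => by
    intro α f hf
    rw [pow_succ]
    show NC2.IsHomog e α ((σ ^ m * σ) f)
    rw [AlgEquiv.mul_apply]
    exact graded_pow σ hσ m α _ (hσ α f hf)

lemma pow_homog_mem {e : X → Fin s → ℕ} {σ : NC.FA k X ≃ₐ[k] NC.FA k X}
    (hσ : NC7.GradedMap e ⇑σ) (m : ℕ) {α : Fin s → ℕ} {f : NC.FA k X}
    (hf : f ∈ (Hsub e α : Submodule k (NC.FA k X))) :
    (σ ^ m) f ∈ (Hsub e α : Submodule k (NC.FA k X)) :=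
  mem_Hsub.2 (graded_pow σ hσ m α f (mem_Hsub.1 hf))

lemma symm_pow_apply (τ : NC.FA k X ≃ₐ[k] NC.FA k X) :
    ∀ (m : ℕ) (y : NC.FA k X), (τ.symm ^ m) ((τ ^ m) y) = y
  | 0, y => by simp
  | m + 1, y => by
    rw [pow_succ τ m, pow_succ' τ.symm m, AlgEquiv.mul_apply, AlgEquiv.mul_apply,
      symm_pow_apply τ m (τ y), AlgEquiv.symm_apply_apply]


/-! ### ideal2 lemmas -/

lemma mem_ideal2_of_mem {S : Set (NC.FA k X)} {g : NC.FA k X} (hg : g ∈ S) :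
    g ∈ NC.ideal2 k S :=
  Submodule.subset_span ⟨1, g, 1, hg, by rw [one_mul, mul_one]⟩

lemma ideal2_mul_left {S : Set (NC.FA k X)} (a : NC.FA k X) {x : NC.FA k X}
    (hx : x ∈ NC.ideal2 k S) : a * x ∈ NC.ideal2 k S := by
  induction hx using Submodule.span_induction with
  | mem x hx =>
    obtain ⟨a', g, b, hg, rfl⟩ := hx
    exact Submodule.subset_span ⟨a * a', g, b, hg, by rw [← mul_assoc, ← mul_assoc]⟩
  | zero => rw [mul_zero]; exact zero_mem _
  | add x y hx hy ihx ihy => rw [mul_add]; exact add_mem ihx ihy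
  | smul c x hx ihx => rw [mul_smul_comm]; exact Submodule.smul_mem _ c ihx

lemma ideal2_mul_right {S : Set (NC.FA k X)} (b : NC.FA k X) {x : NC.FA k X}
    (hx : x ∈ NC.ideal2 k S) : x * b ∈ NC.ideal2 k S := by
  induction hx using Submodule.span_induction with
  | mem x hx =>
    obtain ⟨a', g, b', hg, rfl⟩ := hx
    exact Submodule.subset_span ⟨a', g, b' * b, hg, by rw [← mul_assoc]⟩
  | zero => rw [zero_mul]; exact zero_mem _
  | add x y hx hy ihx ihy => rw [add_mul]; exact add_mem ihx ihy
  | smul c x hx ihx => rw [smul_mul_assoc]; exact Submodule.smul_mem _ c ihx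

lemma mul_left_mem_of_mono (T : Submodule k (NC.FA k X)) (t : NC.FA k X)
    (h : ∀ u, NC.mono k u * t ∈ T) (a : NC.FA k X) : a * t ∈ T := by
  induction a using MonoidAlgebra.induction with
  | zero => rw [zero_mul]; exact zero_mem _
  | single_add u c f hf hc ih =>
    rw [add_mul]
    refine add_mem ?_ ih
    rw [single_eq_smul, smul_mul_assoc]
    exact T.smul_mem c (h u)

lemma mul_right_mem_of_mono (T : Submodule k (NC.FA k X)) (t : NC.FA k X)
    (h : ∀ v, t * NC.mono k v ∈ T) (b : NC.FA k X) : t * b ∈ T := by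
  induction b using MonoidAlgebra.induction with
  | zero => rw [mul_zero]; exact zero_mem _
  | single_add u c f hf hc ih =>
    rw [mul_add]
    refine add_mem ?_ ih
    rw [single_eq_smul, mul_smul_comm]
    exact T.smul_mem c (h u)

def msand (S : Set (NC.FA k X)) : Set (NC.FA k X) :=
  {x | ∃ u g v, g ∈ S ∧ x = NC.mono k u * g * NC.mono k v}

lemma ideal2_eq_span_msand (S : Set (NC.FA k X)) :
    NC.ideal2 k S = Submodule.span k (msand S) := by
  apply le_antisymm
  · rw [NC.ideal2, Submodule.span_le]
    rintro x ⟨a, g, b, hg, rfl⟩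
    have h1 : ∀ u v, NC.mono k u * (g * NC.mono k v) ∈ Submodule.span k (msand S) :=
      fun u v => Submodule.subset_span ⟨u, g, v, hg, by rw [mul_assoc]⟩
    have h2 : ∀ v, (a * g) * NC.mono k v ∈ Submodule.span k (msand S) := by
      intro v
      rw [mul_assoc]
      exact mul_left_mem_of_mono _ _ (fun u => h1 u v) a
    exact mul_right_mem_of_mono _ _ h2 b
  · rw [Submodule.span_le]
    rintro x ⟨u, g, v, hg, rfl⟩
    exact ideal2_mul_right _ (ideal2_mul_left _ (mem_ideal2_of_mem hg))

lemma sandwich_eq_mapDomain (u v : FreeMonoid X) (g : NC.FA k X) :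
    NC.mono k u * g * NC.mono k v = MonoidAlgebra.mapDomain (fun w => u * w * v) g := by
  induction g using MonoidAlgebra.induction with
  | zero => rw [MonoidAlgebra.mapDomain_zero, mul_zero, zero_mul]
  | single_add w c f hf hc ih =>
    rw [MonoidAlgebra.mapDomain_add, ← ih, mul_add, add_mul]
    congr 1
    rw [MonoidAlgebra.mapDomain_single]
    show NC.mono k u * MonoidAlgebra.single w c * NC.mono k v = _
    rw [mono_def, mono_def, MonoidAlgebra.single_mul_single,
      MonoidAlgebra.single_mul_single, one_mul, mul_one]

lemma sandwich_injective (u v : FreeMonoid X) :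
    Function.Injective (fun w : FreeMonoid X => u * w * v) := by
  intro a b h
  simp only at h
  exact mul_left_cancel (mul_right_cancel h)

lemma sandwich_mem_Hsub {e : X → Fin s → ℕ} {α : Fin s → ℕ} {g : NC.FA k X}
    (hg : g ∈ (Hsub e α : Submodule k (NC.FA k X))) (u v : FreeMonoid X) :
    NC.mono k u * g * NC.mono k v ∈
      (Hsub e (NC2.mdeg e u + α + NC2.mdeg e v) : Submodule k (NC.FA k X)) := by
  classical
  rw [mem_Hsub] at hg ⊢
  rw [NC2.IsHomog]
  intro w hw
  rw [sandwich_eq_mapDomain, MonoidAlgebra.mapDomain, MonoidAlgebra.coeff_ofCoeff, Finsupp.mapDomain_support_of_injective (sandwich_injective u v)]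
    at hw
  rw [Finset.mem_image] at hw
  obtain ⟨w', hw', rfl⟩ := hw
  rw [mdeg_mul, mdeg_mul, hg w' hw']

/-! ### filter lemmas and the graded decomposition of an ideal -/

open Classical in
lemma filter_of_homog {e : X → Fin s → ℕ} {α β : Fin s → ℕ} {f : NC.FA k X}
    (hf : f ∈ (Hsub e α : Submodule k (NC.FA k X))) :
      MonoidAlgebra.ofCoeff (Finsupp.filter (fun u => NC2.mdeg e u = β) f.coeff)
        = if α = β then f else 0 := by
  rw [mem_Hsub] at hf
  ext w
  rw [MonoidAlgebra.coeff_ofCoeff, Finsupp.filter_apply]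
  by_cases hw : NC2.mdeg e w = β
  · rw [if_pos hw]
    by_cases hab : α = β
    · rw [if_pos hab]
    · rw [if_neg hab, MonoidAlgebra.coeff_zero, Finsupp.coe_zero, Pi.zero_apply]
      by_contra hne
      exact hab (by rw [← hf w (Finsupp.mem_support_iff.2 hne), hw])
  · rw [if_neg hw]
    by_cases hab : α = β
    · rw [if_pos hab, eq_comm]
      by_contra hne
      exact hw (by rw [hf w (Finsupp.mem_support_iff.2 hne), hab])
    · rw [if_neg hab, MonoidAlgebra.coeff_zero, Finsupp.coe_zero, Pi.zero_apply]

open Classical in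
lemma homog_mem_span_sandwich {e : X → Fin s → ℕ} (S : Set (NC.FA k X))
    (hS : ∀ g ∈ S, ∃ α, g ∈ (Hsub e α : Submodule k (NC.FA k X)))
    {β : Fin s → ℕ} {z : NC.FA k X} (hz : z ∈ NC.ideal2 k S)
    (hzh : z ∈ (Hsub e β : Submodule k (NC.FA k X))) :
    z ∈ Submodule.span k {x : NC.FA k X |
      (∃ u g v, g ∈ S ∧ x = NC.mono k u * g * NC.mono k v) ∧
        x ∈ (Hsub e β : Submodule k (NC.FA k X))} := by
  have key : MonoidAlgebra.ofCoeff (Finsupp.filter (fun u => NC2.mdeg e u = β) z.coeff) ∈ Submodule.span k {x : NC.FA k X |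
      (∃ u g v, g ∈ S ∧ x = NC.mono k u * g * NC.mono k v) ∧
        x ∈ (Hsub e β : Submodule k (NC.FA k X))} := by
    clear hzh
    rw [ideal2_eq_span_msand] at hz
    induction hz using Submodule.span_induction with
    | mem x hx =>
      obtain ⟨u, g, v, hg, rfl⟩ := hx
      obtain ⟨α, hα⟩ := hS g hg
      have hx2 := sandwich_mem_Hsub hα u v
      rw [filter_of_homog hx2]
      by_cases h : NC2.mdeg e u + α + NC2.mdeg e v = β
      · rw [if_pos h]
        exact Submodule.subset_span ⟨⟨u, g, v, hg, rfl⟩, h ▸ hx2⟩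
      · rw [if_neg h]; exact zero_mem _
    | zero => rw [MonoidAlgebra.coeff_zero, Finsupp.filter_zero, MonoidAlgebra.ofCoeff_zero]; exact zero_mem _
    | add x y hx hy ihx ihy => rw [MonoidAlgebra.coeff_add, Finsupp.filter_add, MonoidAlgebra.ofCoeff_add]; exact add_mem ihx ihy
    | smul c x hx ihx => rw [MonoidAlgebra.coeff_smul, Finsupp.filter_smul, MonoidAlgebra.ofCoeff_smul]; exact Submodule.smul_mem _ c ihx
  rwa [filter_of_homog hzh, if_pos rfl] at key

/-! ### phiW / phiMap -/

variable (ρ : NC.FA k X ≃ₐ[k] NC.FA k X)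

lemma tmul_mono (u : FreeMonoid X) (g : NC.FA k X) :
    NC7.tmul ρ (NC.mono k u) g = NC.mono k u * (ρ ^ u.toList.length) g := by
  unfold NC7.tmul
  rw [mono_def]
  rw [MonoidAlgebra.coeff_single, Finsupp.sum_single_index (by rw [zero_smul]), one_smul, ← mono_def]

lemma phiW_nil : NC7.phiW ρ ([] : List X) = 1 := rfl

lemma phiW_cons (x : X) (l : List X) :
    NC7.phiW ρ (x :: l) = NC.mono k (FreeMonoid.of x) * ρ (NC7.phiW ρ l) := by
  show NC7.tmul ρ (NC.mono k (FreeMonoid.of x)) _ = _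
  rw [tmul_mono]
  norm_num [FreeMonoid.toList_of]

noncomputable def phiL : NC.FA k X →ₗ[k] NC.FA k X :=
  Finsupp.linearCombination k (fun u : FreeMonoid X => NC7.phiW ρ u.toList) ∘ₗ
    (MonoidAlgebra.coeffLinearEquiv k).toLinearMap

lemma phiMap_eq : NC7.phiMap ρ = ⇑(phiL ρ) := by
  funext f
  simp only [phiL, LinearMap.comp_apply, Finsupp.linearCombination_apply]
  rfl

lemma phiMap_add (f g : NC.FA k X) :
    NC7.phiMap ρ (f + g) = NC7.phiMap ρ f + NC7.phiMap ρ g := by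
  rw [phiMap_eq]; exact map_add _ _ _

lemma phiMap_smul (c : k) (f : NC.FA k X) :
    NC7.phiMap ρ (c • f) = c • NC7.phiMap ρ f := by
  rw [phiMap_eq]; exact map_smul _ _ _

lemma phiMap_zero : NC7.phiMap ρ 0 = 0 := by
  rw [phiMap_eq]; exact map_zero _

lemma phiMap_single (u : FreeMonoid X) (c : k) :
    NC7.phiMap ρ (MonoidAlgebra.single u c) = c • NC7.phiW ρ u.toList := by
  unfold NC7.phiMap
  rw [MonoidAlgebra.coeff_single, Finsupp.sum_single_index (by rw [zero_smul])]

lemma phiMap_mono (u : FreeMonoid X) :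
    NC7.phiMap ρ (NC.mono k u) = NC7.phiW ρ u.toList := by
  rw [mono_def]
  show NC7.phiMap ρ (MonoidAlgebra.single u (1:k)) = _
  rw [phiMap_single, one_smul]

lemma phiMap_one : NC7.phiMap ρ (1 : NC.FA k X) = 1 := by
  rw [← mono_one, phiMap_mono]
  rfl

lemma phiMap_of_mul (x : X) (h : NC.FA k X) :
    NC7.phiMap ρ (NC.mono k (FreeMonoid.of x) * h)
      = NC.mono k (FreeMonoid.of x) * ρ (NC7.phiMap ρ h) := by
  induction h using MonoidAlgebra.induction with
  | zero => rw [mul_zero, phiMap_zero, map_zero, mul_zero]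
  | single_add w c f hf hc ih =>
    rw [mul_add, phiMap_add, phiMap_add, map_add, mul_add, ih]
    congr 1
    rw [single_eq_smul, mul_smul_comm, phiMap_smul, phiMap_smul, map_smul, mul_smul_comm]
    congr 1
    rw [mono_mul, phiMap_mono, phiMap_mono, FreeMonoid.toList_of_mul, phiW_cons]

lemma phiMap_monoList_mul :
    ∀ (l : List X) (h : NC.FA k X),
      NC7.phiMap ρ (NC.mono k (FreeMonoid.ofList l) * h)
        = NC7.phiMap ρ (NC.mono k (FreeMonoid.ofList l)) * (ρ ^ l.length) (NC7.phiMap ρ h)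
  | [], h => by
    have h1 : FreeMonoid.ofList ([] : List X) = 1 := rfl
    rw [h1, mono_one, one_mul, phiMap_one, one_mul, List.length_nil, pow_zero]
    rfl
  | x :: t, h => by
    have h1 : FreeMonoid.ofList (x :: t) = FreeMonoid.of x * FreeMonoid.ofList t := rfl
    rw [h1, ← mono_mul, mul_assoc, phiMap_of_mul, phiMap_monoList_mul t h,
      map_mul, phiMap_of_mul]
    rw [mul_assoc]
    congr 2
    rw [List.length_cons, pow_succ' ρ t.length, AlgEquiv.mul_apply]

lemma phiMap_mono_mul (u : FreeMonoid X) (h : NC.FA k X) :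
    NC7.phiMap ρ (NC.mono k u * h)
      = NC7.phiMap ρ (NC.mono k u) * (ρ ^ u.toList.length) (NC7.phiMap ρ h) := by
  have := phiMap_monoList_mul ρ u.toList h
  rwa [FreeMonoid.ofList_toList] at this

lemma mul_eq_sum (g h : NC.FA k X) :
    g * h = g.coeff.sum (fun u c => c • (NC.mono k u * h)) := by
  induction g using MonoidAlgebra.induction with
  | zero => rw [zero_mul, MonoidAlgebra.coeff_zero, Finsupp.sum_zero_index]
  | single_add u c f hf hc ih =>
    rw [add_mul, MonoidAlgebra.coeff_add, Finsupp.sum_add_index' (fun a => by rw [zero_smul])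
      (fun a b₁ b₂ => by rw [← add_smul]), MonoidAlgebra.coeff_single, Finsupp.sum_single_index (by rw [zero_smul]),
      ih, single_eq_smul, smul_mul_assoc]

lemma phiMap_homog_mul {e : X → Fin s → ℕ} (he : ∀ x, ∑ i, e x i = 1)
    {α : Fin s → ℕ} {g : NC.FA k X} (hg : g ∈ (Hsub e α : Submodule k (NC.FA k X)))
    (h : NC.FA k X) :
    NC7.phiMap ρ (g * h) = NC7.phiMap ρ g * (ρ ^ (∑ i, α i)) (NC7.phiMap ρ h) := by
  rw [mem_Hsub] at hg
  rw [mul_eq_sum, phiMap_eq, map_finsuppSum]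
  have step1 : (g.coeff.sum fun u c => phiL ρ (c • (NC.mono k u * h)))
      = g.coeff.sum fun u c => c • (phiL ρ (NC.mono k u) * (ρ ^ (∑ i, α i)) (phiL ρ h)) := by
    apply Finsupp.sum_congr
    intro u hu
    rw [map_smul, ← phiMap_eq, phiMap_mono_mul]
    have : u.toList.length = ∑ i, α i := by
      rw [← tdeg_mdeg e he u, hg u hu]
    rw [this]
  rw [step1]
  have step2 : (g.coeff.sum fun u c => c • (phiL ρ (NC.mono k u) * (ρ ^ (∑ i, α i)) (phiL ρ h)))
      = (g.coeff.sum fun u c => c • phiL ρ (NC.mono k u)) * (ρ ^ (∑ i, α i)) (phiL ρ h) := by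
    rw [Finsupp.sum_mul]
    apply Finsupp.sum_congr
    intro u _
    rw [smul_mul_assoc]
  rw [step2]
  congr 1
  have h3 : (g.coeff.sum fun u c => c • phiL ρ (NC.mono k u))
      = g.coeff.sum fun u c => phiL ρ (MonoidAlgebra.single u c) := by
    apply Finsupp.sum_congr
    intro u _
    rw [single_eq_smul, map_smul]
  rw [h3, ← map_finsuppSum, MonoidAlgebra.sum_coeff_single]

/-! ### homogeneity of phiMap -/

lemma phiW_homog {e : X → Fin s → ℕ} (hρ : NC7.GradedMap e ⇑ρ) :
    ∀ l : List X, NC7.phiW ρ l ∈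
      (Hsub e (NC2.mdeg e (FreeMonoid.ofList l)) : Submodule k (NC.FA k X))
  | [] => by
    have h1 : FreeMonoid.ofList ([] : List X) = 1 := rfl
    rw [h1, mdeg_one]
    exact one_mem_Hsub e
  | x :: l => by
    have h1 : FreeMonoid.ofList (x :: l) = FreeMonoid.of x * FreeMonoid.ofList l := rfl
    rw [h1, mdeg_mul, mdeg_of, phiW_cons]
    have h2 := phiW_homog hρ l
    have h3 : ρ (NC7.phiW ρ l) ∈
        (Hsub e (NC2.mdeg e (FreeMonoid.ofList l)) : Submodule k (NC.FA k X)) :=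
      mem_Hsub.2 (hρ _ _ (mem_Hsub.1 h2))
    have h4 : NC.mono k (FreeMonoid.of x) ∈ (Hsub e (e x) : Submodule k (NC.FA k X)) := by
      have h5 := mono_mem_Hsub (k := k) e (FreeMonoid.of x)
      rwa [mdeg_of] at h5
    exact mul_mem_Hsub h4 h3

lemma phiMap_homog {e : X → Fin s → ℕ} (hρ : NC7.GradedMap e ⇑ρ)
    {α : Fin s → ℕ} {f : NC.FA k X} (hf : f ∈ (Hsub e α : Submodule k (NC.FA k X))) :
    NC7.phiMap ρ f ∈ (Hsub e α : Submodule k (NC.FA k X)) := by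
  rw [mem_Hsub] at hf
  unfold NC7.phiMap
  apply Submodule.sum_mem
  intro u hu
  apply Submodule.smul_mem
  have := phiW_homog ρ hρ u.toList
  rwa [FreeMonoid.ofList_toList, hf u hu] at this

/-! ### one-letter support multiplication and commutation -/

lemma phiMap_one_letter_mul {p : NC.FA k X}
    (hp : ∀ w ∈ p.coeff.support, ∃ x, w = FreeMonoid.of x) (h : NC.FA k X) :
    NC7.phiMap ρ (p * h) = p * ρ (NC7.phiMap ρ h) := by
  induction p using MonoidAlgebra.induction with
  | zero => rw [zero_mul, phiMap_zero, zero_mul]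
  | single_add w c f hf hc ih =>
    have hw : w ∈ (MonoidAlgebra.single w c + f).coeff.support := by
      rw [Finsupp.mem_support_iff, MonoidAlgebra.coeff_add, Finsupp.add_apply,
        MonoidAlgebra.coeff_single, Finsupp.single_eq_same,
        Finsupp.notMem_support_iff.1 hf, add_zero]
      exact hc
    have hsub : ∀ y ∈ f.coeff.support, y ∈ (MonoidAlgebra.single w c + f).coeff.support := by
      intro y hy
      rw [Finsupp.mem_support_iff, MonoidAlgebra.coeff_add, Finsupp.add_apply,
        MonoidAlgebra.coeff_single, Finsupp.single_eq_of_ne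
        (fun hwy => hf (by rw [← hwy]; exact hy)), zero_add]
      exact Finsupp.mem_support_iff.1 hy
    obtain ⟨x, rfl⟩ := hp w hw
    rw [add_mul, phiMap_add, ih (fun y hy => hp y (hsub y hy)), single_eq_smul,
      smul_mul_assoc, phiMap_smul, phiMap_of_mul, add_mul, smul_mul_assoc]

lemma support_one_letter_of_graded {e : X → Fin s → ℕ} (he : ∀ x, ∑ i, e x i = 1)
    (π : NC.FA k X ≃ₐ[k] NC.FA k X) (hπ : NC7.GradedMap e ⇑π) (x : X) :
    ∀ w ∈ (π (NC.mono k (FreeMonoid.of x))).coeff.support, ∃ y, w = FreeMonoid.of y := by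
  intro w hw
  have h1 : π (NC.mono k (FreeMonoid.of x)) ∈ (Hsub e (e x) : Submodule k (NC.FA k X)) := by
    have h2 := mono_mem_Hsub (k := k) e (FreeMonoid.of x)
    rw [mdeg_of] at h2
    exact mem_Hsub.2 (hπ _ _ (mem_Hsub.1 h2))
  have h3 : NC2.mdeg e w = e x := mem_Hsub.1 h1 w hw
  have h4 : w.toList.length = 1 := by
    rw [← tdeg_mdeg e he w, h3, he x]
  obtain ⟨y, hy⟩ := List.length_eq_one_iff.1 h4
  exact ⟨y, by rw [← FreeMonoid.ofList_toList w, hy]; rfl⟩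

lemma phiMap_comm (π : NC.FA k X ≃ₐ[k] NC.FA k X)
    (hcomm : ∀ y, π (ρ y) = ρ (π y))
    (hπ : ∀ x : X, ∀ w ∈ (π (NC.mono k (FreeMonoid.of x))).coeff.support, ∃ y, w = FreeMonoid.of y) :
    ∀ f, π (NC7.phiMap ρ f) = NC7.phiMap ρ (π f) := by
  have hword : ∀ l : List X,
      π (NC7.phiMap ρ (NC.mono k (FreeMonoid.ofList l)))
        = NC7.phiMap ρ (π (NC.mono k (FreeMonoid.ofList l))) := by
    intro l
    induction l with
    | nil =>
      have h1 : FreeMonoid.ofList ([] : List X) = 1 := rfl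
      rw [h1, mono_one, phiMap_one, map_one π, phiMap_one]
    | cons x t ih =>
      have h1 : FreeMonoid.ofList (x :: t) = FreeMonoid.of x * FreeMonoid.ofList t := rfl
      rw [h1, ← mono_mul, phiMap_of_mul, map_mul, hcomm, ih, map_mul,
        phiMap_one_letter_mul ρ (hπ x)]
  intro f
  induction f using MonoidAlgebra.induction with
  | zero => rw [phiMap_zero, map_zero π, phiMap_zero]
  | single_add u c g hg hc ih =>
    rw [phiMap_add, map_add, map_add, phiMap_add, ih, single_eq_smul, phiMap_smul,
      map_smul, map_smul, phiMap_smul]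
    have := hword u.toList
    rw [FreeMonoid.ofList_toList] at this
    rw [this]

/-! ### phiMap τ and phiMap τ.symm are mutually inverse -/

lemma eq_on_mono_ext (Ψ₁ Ψ₂ : NC.FA k X → NC.FA k X)
    (hadd₁ : ∀ f g, Ψ₁ (f + g) = Ψ₁ f + Ψ₁ g)
    (hadd₂ : ∀ f g, Ψ₂ (f + g) = Ψ₂ f + Ψ₂ g)
    (hsmul₁ : ∀ (c : k) f, Ψ₁ (c • f) = c • Ψ₁ f)
    (hsmul₂ : ∀ (c : k) f, Ψ₂ (c • f) = c • Ψ₂ f)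
    (h0₁ : Ψ₁ 0 = 0) (h0₂ : Ψ₂ 0 = 0)
    (h : ∀ u, Ψ₁ (NC.mono k u) = Ψ₂ (NC.mono k u)) : ∀ f, Ψ₁ f = Ψ₂ f := by
  intro f
  induction f using MonoidAlgebra.induction with
  | zero => rw [h0₁, h0₂]
  | single_add u c g hg hc ih =>
    rw [hadd₁, hadd₂, ih, single_eq_smul, hsmul₁, hsmul₂, h u]

lemma phiMap_inv_aux [Finite X] {e : X → Fin s → ℕ} (he : ∀ x, ∑ i, e x i = 1)
    (τ : NC.FA k X ≃ₐ[k] NC.FA k X) (hτ : NC7.GradedMap e ⇑τ) :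
    (∀ f, NC7.phiMap τ (NC7.phiMap τ.symm f) = f)
      ∧ (∀ f, NC7.phiMap τ.symm (NC7.phiMap τ f) = f) := by
  have hσ : NC7.GradedMap e ⇑τ.symm := graded_symm e he τ hτ
  have hc1 : ∀ y, τ.symm (τ y) = τ (τ.symm y) := by
    intro y; rw [AlgEquiv.symm_apply_apply, AlgEquiv.apply_symm_apply]
  have hword1 : ∀ l : List X,
      NC7.phiMap τ (NC7.phiMap τ.symm (NC.mono k (FreeMonoid.ofList l)))
        = NC.mono k (FreeMonoid.ofList l) := by
    intro l
    induction l with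
    | nil =>
      have h1 : FreeMonoid.ofList ([] : List X) = 1 := rfl
      rw [h1, mono_one, phiMap_one, phiMap_one]
    | cons x t ih =>
      have h1 : FreeMonoid.ofList (x :: t) = FreeMonoid.of x * FreeMonoid.ofList t := rfl
      rw [h1, ← mono_mul, phiMap_of_mul, phiMap_of_mul,
        ← phiMap_comm τ τ.symm hc1 (support_one_letter_of_graded he τ.symm hσ),
        ih, AlgEquiv.apply_symm_apply]
  have hword2 : ∀ l : List X,
      NC7.phiMap τ.symm (NC7.phiMap τ (NC.mono k (FreeMonoid.ofList l)))
        = NC.mono k (FreeMonoid.ofList l) := by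
    intro l
    induction l with
    | nil =>
      have h1 : FreeMonoid.ofList ([] : List X) = 1 := rfl
      rw [h1, mono_one, phiMap_one, phiMap_one]
    | cons x t ih =>
      have h1 : FreeMonoid.ofList (x :: t) = FreeMonoid.of x * FreeMonoid.ofList t := rfl
      rw [h1, ← mono_mul, phiMap_of_mul, phiMap_of_mul,
        ← phiMap_comm τ.symm τ (fun y => (hc1 y).symm)
          (support_one_letter_of_graded he τ hτ),
        ih, AlgEquiv.symm_apply_apply]
  constructor
  · apply eq_on_mono_ext _ _
      (fun f g => by rw [phiMap_add, phiMap_add])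
      (fun f g => rfl)
      (fun c f => by rw [phiMap_smul, phiMap_smul])
      (fun c f => rfl)
      (by rw [phiMap_zero, phiMap_zero]) rfl
    intro u
    have := hword1 u.toList
    rwa [FreeMonoid.ofList_toList] at this
  · apply eq_on_mono_ext _ _
      (fun f g => by rw [phiMap_add, phiMap_add])
      (fun f g => rfl)
      (fun c f => by rw [phiMap_smul, phiMap_smul])
      (fun c f => rfl)
      (by rw [phiMap_zero, phiMap_zero]) rfl
    intro u
    have := hword2 u.toList
    rwa [FreeMonoid.ofList_toList] at this

/-! ### stability of the ideal -/

variable {τ : NC.FA k X ≃ₐ[k] NC.FA k X} {G : Set (NC.FA k X)}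

lemma tau_stable (hτG : ∀ g ∈ G, τ g ∈ NC.ideal2 k G) :
    ∀ x ∈ NC.ideal2 k G, τ x ∈ NC.ideal2 k G := by
  intro x hx
  induction hx using Submodule.span_induction with
  | mem x hx =>
    obtain ⟨a, g, b, hg, rfl⟩ := hx
    rw [map_mul, map_mul]
    exact ideal2_mul_right _ (ideal2_mul_left _ (hτG g hg))
  | zero => rw [map_zero]; exact zero_mem _
  | add x y hx hy ihx ihy => rw [map_add]; exact add_mem ihx ihy
  | smul c x hx ihx => rw [map_smul]; exact Submodule.smul_mem _ c ihx

lemma tau_pow_stable (hτG : ∀ g ∈ G, τ g ∈ NC.ideal2 k G) :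
    ∀ (m : ℕ) (x), x ∈ NC.ideal2 k G → (τ ^ m) x ∈ NC.ideal2 k G
  | 0, x, hx => by rwa [pow_zero]
  | m + 1, x, hx => by
    rw [pow_succ, AlgEquiv.mul_apply]
    exact tau_pow_stable hτG m _ (tau_stable hτG x hx)

lemma sigma_stable [Finite X] {e : X → Fin s → ℕ} (he : ∀ x, ∑ i, e x i = 1)
    (hτgr : NC7.GradedMap e ⇑τ) (hτG : ∀ g ∈ G, τ g ∈ NC.ideal2 k G)
    {α : Fin s → ℕ} {z : NC.FA k X} (hz : z ∈ NC.ideal2 k G)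
    (hzh : z ∈ (Hsub e α : Submodule k (NC.FA k X))) :
    τ.symm z ∈ NC.ideal2 k G ∧ τ.symm z ∈ (Hsub e α : Submodule k (NC.FA k X)) := by
  haveI : FiniteDimensional k (Hsub e α : Submodule k (NC.FA k X)) := fd_Hsub e he α
  haveI : FiniteDimensional k ↥(NC.ideal2 k G ⊓ Hsub e α) :=
    Submodule.finiteDimensional_of_le inf_le_right
  have hst : ∀ x ∈ NC.ideal2 k G ⊓ Hsub e α,
      τ.toLinearEquiv x ∈ NC.ideal2 k G ⊓ Hsub e α := by
    intro x hx
    exact ⟨tau_stable hτG x hx.1, mem_Hsub.2 (hτgr α x (mem_Hsub.1 hx.2))⟩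
  have h := symm_mem_of_stable τ.toLinearEquiv (NC.ideal2 k G ⊓ Hsub e α) hst ⟨hz, hzh⟩
  exact ⟨h.1, h.2⟩

lemma sigma_pow_stable [Finite X] {e : X → Fin s → ℕ} (he : ∀ x, ∑ i, e x i = 1)
    (hτgr : NC7.GradedMap e ⇑τ) (hτG : ∀ g ∈ G, τ g ∈ NC.ideal2 k G)
    {α : Fin s → ℕ} :
    ∀ (m : ℕ) {z : NC.FA k X}, z ∈ NC.ideal2 k G →
      z ∈ (Hsub e α : Submodule k (NC.FA k X)) →
      (τ.symm ^ m) z ∈ NC.ideal2 k G ∧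
        (τ.symm ^ m) z ∈ (Hsub e α : Submodule k (NC.FA k X))
  | 0, z, hz, hzh => by rw [pow_zero]; exact ⟨hz, hzh⟩
  | m + 1, z, hz, hzh => by
    rw [pow_succ', AlgEquiv.mul_apply]
    obtain ⟨h1, h2⟩ := sigma_pow_stable he hτgr hτG m hz hzh
    exact sigma_stable he hτgr hτG h1 h2

/-! ### the two inclusions -/

lemma main_incl [Finite X] {e : X → Fin s → ℕ} (he : ∀ x, ∑ i, e x i = 1)
    (hGhom : ∀ g ∈ G, ∃ α, g ∈ (Hsub e α : Submodule k (NC.FA k X)))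
    (hτgr : NC7.GradedMap e ⇑τ) (hτG : ∀ g ∈ G, τ g ∈ NC.ideal2 k G) :
    ∀ n : ℕ, ∀ (u v : FreeMonoid X) (g : NC.FA k X) (α : Fin s → ℕ),
      g ∈ G → g ∈ (Hsub e α : Submodule k (NC.FA k X)) →
      u.toList.length + (∑ i, α i) + v.toList.length ≤ n →
      NC7.phiMap τ.symm (NC.mono k u * g * NC.mono k v) ∈
        NC.ideal2 k (NC7.phiMap τ.symm '' G) := by
  classical
  intro n
  induction n using Nat.strong_induction_on with
  | _ n ih =>
  intro u v g α hg hα hlen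
  have expand : NC7.phiMap τ.symm (NC.mono k u * g * NC.mono k v)
      = NC7.phiMap τ.symm (NC.mono k u) *
          (NC7.phiMap τ.symm ((τ.symm ^ u.toList.length) g) *
            (τ.symm ^ (u.toList.length + ∑ i, α i))
              (NC7.phiMap τ.symm (NC.mono k v))) := by
    rw [mul_assoc, phiMap_mono_mul, phiMap_homog_mul τ.symm he hα, map_mul]
    congr 2
    · exact (phiMap_comm τ.symm (τ.symm ^ u.toList.length)
        (fun y => by
          rw [← AlgEquiv.mul_apply, ← AlgEquiv.mul_apply, ← pow_succ, ← pow_succ'])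
        (support_one_letter_of_graded he (τ.symm ^ u.toList.length)
          (graded_pow τ.symm (graded_symm e he τ hτgr) u.toList.length)) g)
    · rw [← AlgEquiv.mul_apply, ← pow_add]
  rw [expand]
  have hkey : NC7.phiMap τ.symm ((τ.symm ^ u.toList.length) g) ∈
      NC.ideal2 k (NC7.phiMap τ.symm '' G) := by
    rcases Nat.eq_zero_or_pos u.toList.length with h0 | hpos
    · rw [h0, pow_zero]
      show NC7.phiMap τ.symm ((1 : NC.FA k X ≃ₐ[k] NC.FA k X) g) ∈ _
      rw [AlgEquiv.one_apply]
      exact mem_ideal2_of_mem ⟨g, hg, rfl⟩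
    · obtain ⟨hz1, hz2⟩ := sigma_pow_stable he hτgr hτG u.toList.length
        (mem_ideal2_of_mem hg) hα
      clear expand
      generalize hzg : (τ.symm ^ u.toList.length) g = z at hz1 hz2 ⊢
      clear hzg
      have hsp := homog_mem_span_sandwich G hGhom hz1 hz2
      clear hz1 hz2
      induction hsp using Submodule.span_induction with
      | mem x hx =>
        obtain ⟨⟨u', g', v', hg', rfl⟩, hxh⟩ := hx
        by_cases hg'0 : g' = 0
        · rw [hg'0, mul_zero, zero_mul, phiMap_zero]
          exact zero_mem _
        · obtain ⟨α', hα'⟩ := hGhom g' hg'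
          obtain ⟨w, hw⟩ := Finsupp.support_nonempty_iff.2 (mt MonoidAlgebra.coeff_eq_zero.1 hg'0)
          have hsupp : u' * w * v' ∈ (NC.mono k u' * g' * NC.mono k v').coeff.support := by
            rw [sandwich_eq_mapDomain, MonoidAlgebra.mapDomain, MonoidAlgebra.coeff_ofCoeff,
              Finsupp.mapDomain_support_of_injective (sandwich_injective u' v')]
            exact Finset.mem_image.2 ⟨w, hw, rfl⟩
          have hdeg : NC2.mdeg e (u' * w * v') = α := mem_Hsub.1 hxh _ hsupp
          have hw' : NC2.mdeg e w = α' := mem_Hsub.1 hα' w hw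
          have hlen2 : u'.toList.length + (∑ i, α' i) + v'.toList.length = ∑ i, α i := by
            rw [← tdeg_mdeg e he u', ← tdeg_mdeg e he v', ← hw', ← hdeg,
              mdeg_mul, mdeg_mul]
            simp only [Pi.add_apply]
            rw [Finset.sum_add_distrib, Finset.sum_add_distrib]
          have hlt : ∑ i, α i < n := by omega
          exact ih (∑ i, α i) hlt u' v' g' α' hg' hα' (le_of_eq hlen2)
      | zero => rw [phiMap_zero]; exact zero_mem _
      | add x y hx hy ihx ihy => rw [phiMap_add]; exact add_mem ihx ihy
      | smul c x hx ihx => rw [phiMap_smul]; exact Submodule.smul_mem _ c ihx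
  exact ideal2_mul_left _ (ideal2_mul_right _ hkey)

lemma rev_incl [Finite X] {e : X → Fin s → ℕ} (he : ∀ x, ∑ i, e x i = 1)
    (hGhom : ∀ g ∈ G, ∃ α, g ∈ (Hsub e α : Submodule k (NC.FA k X)))
    (hτgr : NC7.GradedMap e ⇑τ) (hτG : ∀ g ∈ G, τ g ∈ NC.ideal2 k G) :
    ∀ z ∈ NC.ideal2 k (NC7.phiMap τ.symm '' G), NC7.phiMap τ z ∈ NC.ideal2 k G := by
  intro z hz
  rw [ideal2_eq_span_msand] at hz
  induction hz using Submodule.span_induction with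
  | mem x hx =>
    obtain ⟨u, h, v, ⟨g, hg, rfl⟩, rfl⟩ := hx
    obtain ⟨α, hα⟩ := hGhom g hg
    have hΦg : NC7.phiMap τ.symm g ∈ (Hsub e α : Submodule k (NC.FA k X)) :=
      phiMap_homog τ.symm (graded_symm e he τ hτgr) hα
    rw [mul_assoc, phiMap_mono_mul, phiMap_homog_mul τ he hΦg, map_mul,
      (phiMap_inv_aux he τ hτgr).1 g]
    refine ideal2_mul_left _ (ideal2_mul_right _ ?_)
    exact tau_pow_stable hτG u.toList.length g (mem_ideal2_of_mem hg)
  | zero => rw [phiMap_zero]; exact zero_mem _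
  | add x y hx hy ihx ihy => rw [phiMap_add]; exact add_mem ihx ihy
  | smul c x hx ihx => rw [phiMap_smul]; exact Submodule.smul_mem _ c ihx

/-! ### phiMap turns tmul into multiplication -/

lemma phiMap_tmul [Finite X] {e : X → Fin s → ℕ} (he : ∀ x, ∑ i, e x i = 1)
    (hτgr : NC7.GradedMap e ⇑τ) (f g : NC.FA k X) :
    NC7.phiMap τ.symm (NC7.tmul τ f g)
      = NC7.phiMap τ.symm f * NC7.phiMap τ.symm g := by
  unfold NC7.tmul
  rw [phiMap_eq, map_finsuppSum]
  have step1 : (f.coeff.sum fun u a => phiL τ.symm (a • (NC.mono k u * (τ ^ u.toList.length) g)))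
      = f.coeff.sum fun u a => a • (phiL τ.symm (NC.mono k u) * phiL τ.symm g) := by
    apply Finsupp.sum_congr
    intro u _
    rw [map_smul]
    congr 1
    rw [← phiMap_eq, phiMap_mono_mul]
    congr 1
    rw [phiMap_comm τ.symm (τ.symm ^ u.toList.length)
      (fun y => by rw [← AlgEquiv.mul_apply, ← AlgEquiv.mul_apply, ← pow_succ, ← pow_succ'])
      (support_one_letter_of_graded he (τ.symm ^ u.toList.length)
        (graded_pow τ.symm (graded_symm e he τ hτgr) u.toList.length)) ((τ ^ u.toList.length) g),
      symm_pow_apply]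
  have step2 : (f.coeff.sum fun u a => a • (phiL τ.symm (NC.mono k u) * phiL τ.symm g))
      = (f.coeff.sum fun u a => a • phiL τ.symm (NC.mono k u)) * phiL τ.symm g := by
    rw [Finsupp.sum_mul]
    apply Finsupp.sum_congr
    intro u _
    rw [smul_mul_assoc]
  rw [step1, step2]
  congr 1
  have h3 : (f.coeff.sum fun u a => a • phiL τ.symm (NC.mono k u))
      = f.coeff.sum fun u a => phiL τ.symm (MonoidAlgebra.single u a) := by
    apply Finsupp.sum_congr
    intro u _
    rw [single_eq_smul, map_smul]
  rw [h3, ← map_finsuppSum, MonoidAlgebra.sum_coeff_single]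

end Stmt10Aux

/-- let `k⟨X⟩` be `ℤ^s`-graded with every generator of total degree `1`,
`G` a set of homogeneous polynomials, `A = k⟨X⟩/(G)`, and `τ` a graded algebra
automorphism of `k⟨X⟩` with `τ(G) ⊆ (G)`.  Then the twisted algebra `A^τ̄` is
isomorphic, as a `ℤ^s`-graded algebra, to `k⟨X⟩/(φ_{τ⁻¹}(G))` (the twisted product of
the classes of `f` and `g` in `A^τ̄` being the class of `tmul τ f g`). -/
theorem stmt_10 (k X : Type) [Field k] [Finite X] (s : ℕ)
    (e : X → Fin s → ℕ) (he : ∀ x, ∑ i, e x i = 1)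
    (G : Set (NC.FA k X)) (hGhom : ∀ g ∈ G, ∃ α, NC2.IsHomog e α g)
    (τ : NC.FA k X ≃ₐ[k] NC.FA k X) (hτgr : NC7.GradedMap e ⇑τ)
    (hτG : ∀ g ∈ G, τ g ∈ NC.ideal2 k G) :
    ∃ ψ : (NC.FA k X ⧸ NC.ideal2 k G) ≃ₗ[k]
        (NC.FA k X ⧸ NC.ideal2 k (NC7.phiMap τ.symm '' G)),
      ψ ((NC.ideal2 k G).mkQ 1) = (NC.ideal2 k (NC7.phiMap τ.symm '' G)).mkQ 1 ∧
      (∀ f g f' g' : NC.FA k X,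
        ψ ((NC.ideal2 k G).mkQ f) = (NC.ideal2 k (NC7.phiMap τ.symm '' G)).mkQ f' →
        ψ ((NC.ideal2 k G).mkQ g) = (NC.ideal2 k (NC7.phiMap τ.symm '' G)).mkQ g' →
        ψ ((NC.ideal2 k G).mkQ (NC7.tmul τ f g)) =
          (NC.ideal2 k (NC7.phiMap τ.symm '' G)).mkQ (f' * g')) ∧
      (∀ (α : Fin s → ℕ) (f : NC.FA k X), NC2.IsHomog e α f →
        ∃ f', NC2.IsHomog e α f' ∧
          ψ ((NC.ideal2 k G).mkQ f) = (NC.ideal2 k (NC7.phiMap τ.symm '' G)).mkQ f') := by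
  classical
  open Stmt10Aux in
  have hGhom' : ∀ g ∈ G, ∃ α, g ∈ (Stmt10Aux.Hsub e α : Submodule k (NC.FA k X)) :=
    fun g hg => (hGhom g hg).imp (fun α h => Stmt10Aux.mem_Hsub.2 h)
  have hinv := Stmt10Aux.phiMap_inv_aux he τ hτgr
  have hE1 : (Stmt10Aux.phiL τ.symm).comp (Stmt10Aux.phiL τ) = LinearMap.id := by
    apply LinearMap.ext
    intro f
    show Stmt10Aux.phiL τ.symm (Stmt10Aux.phiL τ f) = f
    rw [← Stmt10Aux.phiMap_eq, ← Stmt10Aux.phiMap_eq]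
    exact hinv.2 f
  have hE2 : (Stmt10Aux.phiL τ).comp (Stmt10Aux.phiL τ.symm) = LinearMap.id := by
    apply LinearMap.ext
    intro f
    show Stmt10Aux.phiL τ (Stmt10Aux.phiL τ.symm f) = f
    rw [← Stmt10Aux.phiMap_eq, ← Stmt10Aux.phiMap_eq]
    exact hinv.1 f
  set E : NC.FA k X ≃ₗ[k] NC.FA k X :=
    LinearEquiv.ofLinear (Stmt10Aux.phiL τ.symm) (Stmt10Aux.phiL τ) hE1 hE2 with hEdef
  have hEf : ∀ f, E f = NC7.phiMap τ.symm f := by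
    intro f
    rw [Stmt10Aux.phiMap_eq]
    rfl
  have hfwd : ∀ x ∈ NC.ideal2 k G,
      NC7.phiMap τ.symm x ∈ NC.ideal2 k (NC7.phiMap τ.symm '' G) := by
    intro x hx
    rw [Stmt10Aux.ideal2_eq_span_msand] at hx
    induction hx using Submodule.span_induction with
    | mem x hx =>
      obtain ⟨u, g, v, hg, rfl⟩ := hx
      obtain ⟨α, hα⟩ := hGhom' g hg
      exact Stmt10Aux.main_incl he hGhom' hτgr hτG _ u v g α hg hα le_rfl
    | zero => rw [Stmt10Aux.phiMap_zero]; exact zero_mem _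
    | add x y hx hy ihx ihy => rw [Stmt10Aux.phiMap_add]; exact add_mem ihx ihy
    | smul c x hx ihx => rw [Stmt10Aux.phiMap_smul]; exact Submodule.smul_mem _ c ihx
  have hmap : Submodule.map (E : NC.FA k X →ₗ[k] NC.FA k X) (NC.ideal2 k G)
      = NC.ideal2 k (NC7.phiMap τ.symm '' G) := by
    apply le_antisymm
    · rintro _ ⟨x, hx, rfl⟩
      have : (E : NC.FA k X →ₗ[k] NC.FA k X) x = NC7.phiMap τ.symm x := hEf x
      rw [this]
      exact hfwd x hx
    · intro z hz
      refine ⟨NC7.phiMap τ z, Stmt10Aux.rev_incl he hGhom' hτgr hτG z hz, ?_⟩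
      show E (NC7.phiMap τ z) = z
      rw [hEf]
      exact hinv.2 z
  refine ⟨Submodule.Quotient.equiv _ _ E hmap, ?_, ?_, ?_⟩
  · show (NC.ideal2 k (NC7.phiMap τ.symm '' G)).mkQ (E 1) = _
    rw [hEf, Stmt10Aux.phiMap_one]
  · intro f g f' g' hf hg
    have hf1 : NC7.phiMap τ.symm f - f' ∈ NC.ideal2 k (NC7.phiMap τ.symm '' G) := by
      have : (NC.ideal2 k (NC7.phiMap τ.symm '' G)).mkQ (NC7.phiMap τ.symm f)
          = (NC.ideal2 k (NC7.phiMap τ.symm '' G)).mkQ f' := by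
        rw [← hf]
        show _ = (NC.ideal2 k (NC7.phiMap τ.symm '' G)).mkQ (E f)
        rw [hEf]
      rw [Submodule.mkQ_apply, Submodule.mkQ_apply] at this
      exact (Submodule.Quotient.eq _).1 this
    have hg1 : NC7.phiMap τ.symm g - g' ∈ NC.ideal2 k (NC7.phiMap τ.symm '' G) := by
      have : (NC.ideal2 k (NC7.phiMap τ.symm '' G)).mkQ (NC7.phiMap τ.symm g)
          = (NC.ideal2 k (NC7.phiMap τ.symm '' G)).mkQ g' := by
        rw [← hg]
        show _ = (NC.ideal2 k (NC7.phiMap τ.symm '' G)).mkQ (E g)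
        rw [hEf]
      rw [Submodule.mkQ_apply, Submodule.mkQ_apply] at this
      exact (Submodule.Quotient.eq _).1 this
    show (NC.ideal2 k (NC7.phiMap τ.symm '' G)).mkQ (E (NC7.tmul τ f g)) = _
    rw [hEf, Stmt10Aux.phiMap_tmul he hτgr, Submodule.mkQ_apply, Submodule.mkQ_apply,
      Submodule.Quotient.eq]
    have hiden : NC7.phiMap τ.symm f * NC7.phiMap τ.symm g - f' * g'
        = (NC7.phiMap τ.symm f - f') * NC7.phiMap τ.symm g
            + f' * (NC7.phiMap τ.symm g - g') := by
      noncomm_ring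
    rw [hiden]
    exact add_mem (Stmt10Aux.ideal2_mul_right _ hf1) (Stmt10Aux.ideal2_mul_left _ hg1)
  · intro α f hf
    refine ⟨NC7.phiMap τ.symm f, ?_, ?_⟩
    · exact Stmt10Aux.mem_Hsub.1
        (Stmt10Aux.phiMap_homog τ.symm (Stmt10Aux.graded_symm e he τ hτgr)
          (Stmt10Aux.mem_Hsub.2 hf))
    · show (NC.ideal2 k (NC7.phiMap τ.symm '' G)).mkQ (E f) = _
      rw [hEf]
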